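/- Let α ∈ (0,1) and let X be a real random variable with E[max(0,−X)] < ∞. Then the set of minimizers of the function s ↦ −(1−α)^{−1}( E[X·1{−X ≥ s}] + s·(α − P[−X < s]) ) over s ∈ ℝ is exactly the closed interval [q_α(−X), −q_{1−α}(X)]; in particular this interval is non-empty. -/

import Mathlib

open MeasureTheory Set

/-- The `α`-quantile of a real random variable `X`:
`q_α(X) = inf {x ∈ ℝ : P[X ≤ x] ≥ α}`. -/
noncomputable def quantile {Ω : Type*} [MeasurableSpace Ω] (μ : Measure Ω)
    (X : Ω → ℝ) (α : ℝ) : ℝ :=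
  sInf {x : ℝ | ENNReal.ofReal α ≤ μ {ω | X ω ≤ x}}

/-- The objective function `s ↦ -(1-α)⁻¹ (E[X·1{-X ≥ s}] + s·(α - P[-X < s]))`. -/
noncomputable def shortfallObjective {Ω : Type*} [MeasurableSpace Ω] (μ : Measure Ω)
    (X : Ω → ℝ) (α : ℝ) (s : ℝ) : ℝ :=
  - (1 - α)⁻¹ * ((∫ ω in {ω | s ≤ - X ω}, X ω ∂μ) + s * (α - (μ {ω | - X ω < s}).toReal))

section aux
variable {Ω : Type*} [MeasurableSpace Ω] {μ : Measure Ω} [IsProbabilityMeasure μ]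
  {X Y : Ω → ℝ}
open Filter

lemma aux_exists_le_big (hY : Measurable Y) {c : ENNReal} (hc : c < 1) :
    ∃ x : ℝ, c ≤ μ {ω | Y ω ≤ x} := by
  have h1 : (⋃ n : ℕ, {ω | Y ω ≤ (n : ℝ)}) = univ := by
    ext ω
    simp only [mem_iUnion, mem_setOf_eq, mem_univ, iff_true]
    exact exists_nat_ge (Y ω)
  have hm : Monotone (fun n : ℕ => {ω | Y ω ≤ (n : ℝ)}) := by
    intro n m hnm ω hω
    have h1 : Y ω ≤ (n : ℝ) := hω
    have h2 : (n : ℝ) ≤ m := by exact_mod_cast hnm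
    exact le_trans h1 h2
  have ht := tendsto_measure_iUnion_atTop (μ := μ) hm
  rw [h1, measure_univ] at ht
  have := ht.eventually (eventually_gt_nhds hc)
  obtain ⟨n, hn⟩ := this.exists
  exact ⟨n, hn.le⟩

lemma aux_exists_le_small (hY : Measurable Y) {c : ENNReal} (hc : 0 < c) :
    ∃ x : ℝ, μ {ω | Y ω ≤ x} < c := by
  have h1 : (⋂ n : ℕ, {ω | Y ω ≤ -(n : ℝ)}) = ∅ := by
    ext ω
    simp only [mem_iInter, mem_setOf_eq, mem_empty_iff_false, iff_false, not_forall]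
    obtain ⟨n, hn⟩ := exists_nat_gt (-(Y ω))
    exact ⟨n, by push_neg; linarith⟩
  have hm : Antitone (fun n : ℕ => {ω | Y ω ≤ -(n : ℝ)}) := by
    intro n m hnm ω hω
    have h1 : Y ω ≤ -(m : ℝ) := hω
    have h2 : -(m : ℝ) ≤ -(n : ℝ) := by
      have : (n : ℝ) ≤ m := by exact_mod_cast hnm
      linarith
    exact le_trans h1 h2
  have ht := tendsto_measure_iInter_atTop (μ := μ)
    (fun n => (measurableSet_le hY measurable_const).nullMeasurableSet) hm
    ⟨0, measure_ne_top μ _⟩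
  rw [h1, measure_empty] at ht
  have := ht.eventually (eventually_lt_nhds hc)
  obtain ⟨n, hn⟩ := this.exists
  exact ⟨-(n : ℝ), hn⟩

/-- The fundamental property of the quantile: `q_α(Y) ≤ s ↔ α ≤ P[Y ≤ s]`. -/
lemma quantile_le_iff (hY : Measurable Y) {α : ℝ} (h0 : 0 < α) (h1 : α < 1) {s : ℝ} :
    quantile μ Y α ≤ s ↔ ENNReal.ofReal α ≤ μ {ω | Y ω ≤ s} := by
  set S := {x : ℝ | ENNReal.ofReal α ≤ μ {ω | Y ω ≤ x}} with hS
  have hne : S.Nonempty := aux_exists_le_big hY (ENNReal.ofReal_lt_one.2 h1)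
  have hupc : ∀ x ∈ S, ∀ y, x ≤ y → y ∈ S := by
    intro x hx y hxy
    exact le_trans hx (measure_mono fun ω hω => le_trans hω hxy)
  have hbdd : BddBelow S := by
    obtain ⟨b, hb⟩ := aux_exists_le_small hY (μ := μ) (ENNReal.ofReal_pos.2 h0)
    refine ⟨b, fun x hx => ?_⟩
    by_contra hbx
    push_neg at hbx
    exact absurd (le_trans hx (measure_mono fun ω hω => le_trans hω hbx.le)) (not_le.2 hb)
  have hmem : quantile μ Y α ∈ S := by
    set q := quantile μ Y α with hq
    have hAnt : Antitone (fun n : ℕ => {ω | Y ω ≤ q + 1 / ((n : ℝ) + 1)}) := by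
      intro n m hnm ω hω
      have h1 : Y ω ≤ q + 1 / ((m : ℝ) + 1) := hω
      have h2 : 1 / ((m : ℝ) + 1) ≤ 1 / ((n : ℝ) + 1) := by
        apply one_div_le_one_div_of_le (by positivity)
        have : (n : ℝ) ≤ m := by exact_mod_cast hnm
        linarith
      show Y ω ≤ q + 1 / ((n : ℝ) + 1)
      linarith
    have hInt : (⋂ n : ℕ, {ω | Y ω ≤ q + 1 / ((n : ℝ) + 1)}) = {ω | Y ω ≤ q} := by
      ext ω
      simp only [mem_iInter, mem_setOf_eq]
      constructor
      · intro h
        by_contra hc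
        push_neg at hc
        obtain ⟨n, hn⟩ := exists_nat_one_div_lt (show (0:ℝ) < Y ω - q by linarith)
        exact absurd (h n) (by push_neg; linarith)
      · intro h n
        have : (0:ℝ) < 1 / ((n : ℝ) + 1) := by positivity
        linarith
    have ht := tendsto_measure_iInter_atTop (μ := μ)
      (fun n => (measurableSet_le hY measurable_const).nullMeasurableSet) hAnt
      ⟨0, measure_ne_top μ _⟩
    rw [hInt] at ht
    refine ge_of_tendsto ht (Eventually.of_forall fun n => ?_)
    have hqlt : q < q + 1 / ((n : ℝ) + 1) := by
      have : (0:ℝ) < 1 / ((n : ℝ) + 1) := by positivity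
      linarith
    obtain ⟨x, hxS, hxlt⟩ := exists_lt_of_csInf_lt hne hqlt
    exact hupc x hxS _ hxlt.le
  constructor
  · intro h
    exact hupc _ hmem s h
  · intro h
    exact csInf_le hbdd h

/-- `P[Y < q_α(Y)] ≤ α`. -/
lemma measure_lt_quantile_le (hY : Measurable Y) {α : ℝ} (h0 : 0 < α) (h1 : α < 1) :
    μ {ω | Y ω < quantile μ Y α} ≤ ENNReal.ofReal α := by
  set q := quantile μ Y α with hq
  have hMon : Monotone (fun n : ℕ => {ω | Y ω ≤ q - 1 / ((n : ℝ) + 1)}) := by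
    intro n m hnm ω hω
    have h1 : Y ω ≤ q - 1 / ((n : ℝ) + 1) := hω
    have h2 : 1 / ((m : ℝ) + 1) ≤ 1 / ((n : ℝ) + 1) := by
      apply one_div_le_one_div_of_le (by positivity)
      have : (n : ℝ) ≤ m := by exact_mod_cast hnm
      linarith
    show Y ω ≤ q - 1 / ((m : ℝ) + 1)
    linarith
  have hUn : (⋃ n : ℕ, {ω | Y ω ≤ q - 1 / ((n : ℝ) + 1)}) = {ω | Y ω < q} := by
    ext ω
    simp only [mem_iUnion, mem_setOf_eq]
    constructor
    · rintro ⟨n, hn⟩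
      have : (0:ℝ) < 1 / ((n : ℝ) + 1) := by positivity
      linarith
    · intro h
      obtain ⟨n, hn⟩ := exists_nat_one_div_lt (show (0:ℝ) < q - Y ω by linarith)
      exact ⟨n, by linarith⟩
  have ht := tendsto_measure_iUnion_atTop (μ := μ) hMon
  rw [hUn] at ht
  refine le_of_tendsto ht (Eventually.of_forall fun n => ?_)
  by_contra hc
  push_neg at hc
  have := (quantile_le_iff hY h0 h1).2 hc.le
  have hlt : (0:ℝ) < 1 / ((n : ℝ) + 1) := by positivity
  linarith

lemma aux_int_g (hY : Measurable Y) (hint : Integrable (fun ω => max 0 (Y ω)) μ) (s : ℝ) :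
    Integrable (fun ω => max 0 (Y ω - s)) μ := by
  refine Integrable.mono (hint.add (integrable_const |s|)) ?_ ?_
  · exact ((measurable_const.max (hY.sub measurable_const))).aestronglyMeasurable
  · refine Eventually.of_forall fun ω => ?_
    simp only [Pi.add_apply, Real.norm_eq_abs]
    have h1 : 0 ≤ max 0 (Y ω - s) := le_max_left _ _
    have h2 : max 0 (Y ω - s) ≤ max 0 (Y ω) + |s| := by
      rcases le_or_gt (Y ω - s) 0 with h | h
      · rw [max_eq_left h]; positivity
      · rw [max_eq_right h.le]
        have : Y ω ≤ max 0 (Y ω) := le_max_right _ _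
        have := neg_abs_le s
        linarith
    rw [abs_of_nonneg h1, abs_of_nonneg (by positivity : (0:ℝ) ≤ max 0 (Y ω) + |s|)]
    exact h2

/-- lower bound : `(t-s) ⬝ P[t ≤ Y] ≤ E[(Y-s)⁺] - E[(Y-t)⁺]` for `s ≤ t` -/
lemma aux_I_lb (hY : Measurable Y) (hint : Integrable (fun ω => max 0 (Y ω)) μ)
    {s t : ℝ} (hst : s ≤ t) :
    (t - s) * (μ {ω | t ≤ Y ω}).toReal ≤
      (∫ ω, max 0 (Y ω - s) ∂μ) - ∫ ω, max 0 (Y ω - t) ∂μ := by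
  have hmeas : MeasurableSet {ω | t ≤ Y ω} := measurableSet_le measurable_const hY
  have hind : Integrable ({ω | t ≤ Y ω}.indicator fun _ => (t - s)) μ :=
    (integrable_const (t - s)).indicator hmeas
  have hgs := aux_int_g hY hint s
  have hgt := aux_int_g hY hint t
  have hmono : ∀ ω, ({ω | t ≤ Y ω}.indicator fun _ => (t - s)) ω ≤
      max 0 (Y ω - s) - max 0 (Y ω - t) := by
    intro ω
    simp only [Set.indicator_apply, mem_setOf_eq]
    rcases le_or_gt t (Y ω) with h | h
    · rw [if_pos h]
      rw [max_eq_right (by linarith : (0:ℝ) ≤ Y ω - s), max_eq_right (by linarith : (0:ℝ) ≤ Y ω - t)]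
      linarith
    · rw [if_neg (not_le.2 h)]
      have : max 0 (Y ω - t) ≤ max 0 (Y ω - s) := max_le_max le_rfl (by linarith)
      linarith
  calc (t - s) * (μ {ω | t ≤ Y ω}).toReal
      = ∫ ω, ({ω | t ≤ Y ω}.indicator fun _ => (t - s)) ω ∂μ := by
        rw [integral_indicator_const _ hmeas]; simp [mul_comm, measureReal_def]
    _ ≤ ∫ ω, (max 0 (Y ω - s) - max 0 (Y ω - t)) ∂μ :=
        integral_mono hind (hgs.sub hgt) hmono
    _ = _ := integral_sub hgs hgt

/-- upper bound : `E[(Y-s)⁺] - E[(Y-t)⁺] ≤ (t-s) ⬝ P[s < Y]` for `s ≤ t` -/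
lemma aux_I_ub (hY : Measurable Y) (hint : Integrable (fun ω => max 0 (Y ω)) μ)
    {s t : ℝ} (hst : s ≤ t) :
    (∫ ω, max 0 (Y ω - s) ∂μ) - ∫ ω, max 0 (Y ω - t) ∂μ ≤
      (t - s) * (μ {ω | s < Y ω}).toReal := by
  have hmeas : MeasurableSet {ω | s < Y ω} := measurableSet_lt measurable_const hY
  have hind : Integrable ({ω | s < Y ω}.indicator fun _ => (t - s)) μ :=
    (integrable_const (t - s)).indicator hmeas
  have hgs := aux_int_g hY hint s
  have hgt := aux_int_g hY hint t
  have hmono : ∀ ω, max 0 (Y ω - s) - max 0 (Y ω - t) ≤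
      ({ω | s < Y ω}.indicator fun _ => (t - s)) ω := by
    intro ω
    simp only [Set.indicator_apply, mem_setOf_eq]
    rcases le_or_gt (Y ω) s with h | h
    · rw [if_neg (not_lt.2 h)]
      rw [max_eq_left (by linarith : Y ω - s ≤ 0), max_eq_left (by linarith : Y ω - t ≤ 0)]
      simp
    · rw [if_pos h]
      have h1 : Y ω - t ≤ max 0 (Y ω - t) := le_max_right _ _
      rw [max_eq_right (by linarith : (0:ℝ) ≤ Y ω - s)]
      linarith
  calc (∫ ω, max 0 (Y ω - s) ∂μ) - ∫ ω, max 0 (Y ω - t) ∂μ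
      = ∫ ω, (max 0 (Y ω - s) - max 0 (Y ω - t)) ∂μ := (integral_sub hgs hgt).symm
    _ ≤ ∫ ω, ({ω | s < Y ω}.indicator fun _ => (t - s)) ω ∂μ :=
        integral_mono (hgs.sub hgt) hind hmono
    _ = (t - s) * (μ {ω | s < Y ω}).toReal := by
        rw [integral_indicator_const _ hmeas]; simp [mul_comm, measureReal_def]



lemma aux_compl_sum (hY : Measurable Y) (s : ℝ) :
    (μ {ω | Y ω ≤ s}).toReal + (μ {ω | s < Y ω}).toReal = 1 := by
  have h1 : {ω | s < Y ω} = {ω | Y ω ≤ s}ᶜ := by ext ω; simp [not_le]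
  have h2 := measure_add_measure_compl (μ := μ) (s := {ω | Y ω ≤ s})
    (measurableSet_le hY measurable_const)
  rw [h1, ← ENNReal.toReal_add (measure_ne_top μ _) (measure_ne_top μ _), h2, measure_univ,
    ENNReal.toReal_one]

lemma aux_compl_sum' (hY : Measurable Y) (s : ℝ) :
    (μ {ω | Y ω < s}).toReal + (μ {ω | s ≤ Y ω}).toReal = 1 := by
  have h1 : {ω | s ≤ Y ω} = {ω | Y ω < s}ᶜ := by ext ω; simp [not_lt]
  have h2 := measure_add_measure_compl (μ := μ) (s := {ω | Y ω < s})
    (measurableSet_lt hY measurable_const)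
  rw [h1, ← ENNReal.toReal_add (measure_ne_top μ _) (measure_ne_top μ _), h2, measure_univ,
    ENNReal.toReal_one]

lemma aux_obj_eq (hX : Measurable X) (hint : Integrable (fun ω => max 0 (- X ω)) μ)
    {α : ℝ} (h1 : α < 1) (s : ℝ) :
    shortfallObjective μ X α s = s + (1 - α)⁻¹ * ∫ ω, max 0 (- X ω - s) ∂μ := by
  have hY : Measurable fun ω => -X ω := hX.neg
  have hmeas : MeasurableSet {ω | s ≤ -X ω} := measurableSet_le measurable_const hY
  have hg : Integrable (fun ω => max 0 (-X ω - s)) μ := aux_int_g hY hint s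
  have hindint : Integrable ({ω | s ≤ -X ω}.indicator fun _ => s) μ :=
    (integrable_const s).indicator hmeas
  have hkey : ∀ ω, ({ω | s ≤ -X ω}.indicator X) ω =
      -(max 0 (-X ω - s)) - {ω | s ≤ -X ω}.indicator (fun _ => s) ω := by
    intro ω
    simp only [Set.indicator_apply, mem_setOf_eq]
    rcases le_or_gt s (-X ω) with h | h
    · rw [if_pos h, if_pos h, max_eq_right (by linarith : (0:ℝ) ≤ -X ω - s)]
      ring
    · rw [if_neg (not_le.2 h), if_neg (not_le.2 h), max_eq_left (by linarith : -X ω - s ≤ 0)]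
      ring
  have hsetint : ∫ ω in {ω | s ≤ -X ω}, X ω ∂μ =
      -(∫ ω, max 0 (-X ω - s) ∂μ) - s * (μ {ω | s ≤ -X ω}).toReal := by
    have hstep : ∫ ω, ({ω | s ≤ -X ω}.indicator X) ω ∂μ
        = ∫ ω, (-(max 0 (-X ω - s)) - {ω | s ≤ -X ω}.indicator (fun _ => s) ω) ∂μ :=
      integral_congr_ae (Eventually.of_forall hkey)
    have hgneg : Integrable (fun ω => -(max 0 (-X ω - s))) μ := hg.neg
    rw [← integral_indicator hmeas, hstep, integral_sub hgneg hindint, integral_neg,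
      integral_indicator_const _ hmeas]
    simp [mul_comm, measureReal_def]
  have hp := aux_compl_sum' (μ := μ) hY s
  have hne : (1:ℝ) - α ≠ 0 := by linarith
  have hplt : (μ {ω | -X ω < s}).toReal = 1 - (μ {ω | s ≤ -X ω}).toReal := by
    linarith
  unfold shortfallObjective
  rw [hsetint, hplt]
  field_simp
  ring
end aux

/-- The set of minimizers of `s ↦ -(1-α)⁻¹ (E[X·1{-X ≥ s}] + s·(α - P[-X < s]))` is
exactly the closed interval `[q_α(-X), -q_{1-α}(X)]`, which in particular is non-empty. -/

theorem shortfallObjective_argmin {Ω : Type*} [MeasurableSpace Ω] (μ : Measure Ω)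
    [IsProbabilityMeasure μ] (α : ℝ) (hα : α ∈ Set.Ioo (0 : ℝ) 1)
    (X : Ω → ℝ) (hX : Measurable X)
    (hint : Integrable (fun ω => max 0 (- X ω)) μ) :
    {s : ℝ | ∀ t : ℝ, shortfallObjective μ X α s ≤ shortfallObjective μ X α t}
        = Set.Icc (quantile μ (fun ω => - X ω) α) (- quantile μ X (1 - α)) ∧
      quantile μ (fun ω => - X ω) α ≤ - quantile μ X (1 - α) := by
  obtain ⟨h0, h1⟩ := hα
  have hY : Measurable fun ω => -X ω := hX.neg
  have hβ0 : (0:ℝ) < 1 - α := by linarith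
  have hβ1 : (1:ℝ) - α < 1 := by linarith
  have hcpos : (0:ℝ) < (1 - α)⁻¹ := by positivity
  have hc1 : (1 - α)⁻¹ * (1 - α) = 1 := inv_mul_cancel₀ (by linarith)
  have hint' : Integrable (fun ω => max 0 ((fun ω => -X ω) ω)) μ := hint
  set Y : Ω → ℝ := fun ω => -X ω with hYdef
  set q1 := quantile μ Y α with hq1def
  set q2 := -quantile μ X (1 - α) with hq2def
  set c := (1 - α)⁻¹ with hcdef
  set f : ℝ → ℝ := fun s => s + c * ∫ ω, max 0 (Y ω - s) ∂μ with hfdef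
  have hobj : ∀ s, shortfallObjective μ X α s = f s := fun s => aux_obj_eq hX hint h1 s
  -- quantile characterizations
  have hq1_iff : ∀ s : ℝ, q1 ≤ s ↔ ENNReal.ofReal α ≤ μ {ω | Y ω ≤ s} :=
    fun s => quantile_le_iff hY h0 h1
  have hq2_iff : ∀ s : ℝ, s ≤ q2 ↔ ENNReal.ofReal (1 - α) ≤ μ {ω | s ≤ Y ω} := by
    intro s
    have h := quantile_le_iff (μ := μ) hX hβ0 hβ1 (s := -s)
    have hset : {ω | X ω ≤ -s} = {ω | s ≤ Y ω} := by
      ext ω; simp [hYdef, le_neg]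
    rw [hset] at h
    rw [← h, hq2def]
    constructor <;> intro <;> linarith
  -- difference bounds for f
  have hflb : ∀ s t : ℝ, s ≤ t →
      (t - s) * (1 - c * (μ {ω | s < Y ω}).toReal) ≤ f t - f s := by
    intro s t hst
    have h := aux_I_ub (μ := μ) hY hint' hst
    have h2 := mul_le_mul_of_nonneg_left h hcpos.le
    simp only [hfdef]
    nlinarith [h2]
  have hfub : ∀ s t : ℝ, s ≤ t →
      f t - f s ≤ (t - s) * (1 - c * (μ {ω | t ≤ Y ω}).toReal) := by
    intro s t hst
    have h := aux_I_lb (μ := μ) hY hint' hst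
    have h2 := mul_le_mul_of_nonneg_left h hcpos.le
    simp only [hfdef]
    nlinarith [h2]
  clear_value Y q1 q2 c f
  -- characterization of minimizers
  have hchar : ∀ s : ℝ, (∀ t, f s ≤ f t) ↔
      (ENNReal.ofReal α ≤ μ {ω | Y ω ≤ s} ∧ ENNReal.ofReal (1 - α) ≤ μ {ω | s ≤ Y ω}) := by
    intro s
    constructor
    · intro hmin
      constructor
      · by_contra hcon
        push_neg at hcon
        have hsum := aux_compl_sum (μ := μ) hY s
        have htR0 := (ENNReal.lt_ofReal_iff_toReal_lt (measure_ne_top μ _)).1 hcon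
        have hlt : 1 - α < (μ {ω | s < Y ω}).toReal := by linarith
        have hlt' : ENNReal.ofReal (1 - α) < μ {ω | s < Y ω} :=
          (ENNReal.ofReal_lt_iff_lt_toReal hβ0.le (measure_ne_top μ _)).2 hlt
        have hMon : Monotone (fun n : ℕ => {ω | s + 1 / ((n : ℝ) + 1) ≤ Y ω}) := by
          intro n m hnm ω hω
          have ha : s + 1 / ((n : ℝ) + 1) ≤ Y ω := hω
          have hb : 1 / ((m : ℝ) + 1) ≤ 1 / ((n : ℝ) + 1) := by
            apply one_div_le_one_div_of_le (by positivity)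
            have : (n : ℝ) ≤ m := by exact_mod_cast hnm
            linarith
          show s + 1 / ((m : ℝ) + 1) ≤ Y ω
          linarith
        have hUn : (⋃ n : ℕ, {ω | s + 1 / ((n : ℝ) + 1) ≤ Y ω}) = {ω | s < Y ω} := by
          ext ω
          simp only [mem_iUnion, mem_setOf_eq]
          constructor
          · rintro ⟨n, hn⟩
            have : (0:ℝ) < 1 / ((n : ℝ) + 1) := by positivity
            linarith
          · intro h
            obtain ⟨n, hn⟩ := exists_nat_one_div_lt (show (0:ℝ) < Y ω - s by linarith)
            exact ⟨n, by linarith⟩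
        have ht := tendsto_measure_iUnion_atTop (μ := μ) hMon
        rw [hUn] at ht
        obtain ⟨n, hn⟩ := (ht.eventually (eventually_gt_nhds hlt')).exists
        set t := s + 1 / ((n : ℝ) + 1) with htdef
        have hts : s < t := by
          have : (0:ℝ) < 1 / ((n : ℝ) + 1) := by positivity
          simp only [htdef]; linarith
        have hub := hfub s t hts.le
        have htR : 1 - α < (μ {ω | t ≤ Y ω}).toReal :=
          (ENNReal.ofReal_lt_iff_lt_toReal hβ0.le (measure_ne_top μ _)).1 hn
        have hgt1 : 1 < c * (μ {ω | t ≤ Y ω}).toReal := by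
          have := mul_lt_mul_of_pos_left htR hcpos
          rw [hc1] at this
          exact this
        have hneg : f t - f s < 0 := by nlinarith
        exact absurd (hmin t) (by linarith)
      · by_contra hcon
        push_neg at hcon
        have hAnt : Antitone (fun n : ℕ => {ω | s - 1 / ((n : ℝ) + 1) < Y ω}) := by
          intro n m hnm ω hω
          have ha : s - 1 / ((m : ℝ) + 1) < Y ω := hω
          have hb : 1 / ((m : ℝ) + 1) ≤ 1 / ((n : ℝ) + 1) := by
            apply one_div_le_one_div_of_le (by positivity)
            have : (n : ℝ) ≤ m := by exact_mod_cast hnm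
            linarith
          show s - 1 / ((n : ℝ) + 1) < Y ω
          linarith
        have hInt : (⋂ n : ℕ, {ω | s - 1 / ((n : ℝ) + 1) < Y ω}) = {ω | s ≤ Y ω} := by
          ext ω
          simp only [mem_iInter, mem_setOf_eq]
          constructor
          · intro h
            by_contra hc'
            push_neg at hc'
            obtain ⟨n, hn⟩ := exists_nat_one_div_lt (show (0:ℝ) < s - Y ω by linarith)
            exact absurd (h n) (by push_neg; linarith)
          · intro h n
            have : (0:ℝ) < 1 / ((n : ℝ) + 1) := by positivity
            linarith
        have ht := tendsto_measure_iInter_atTop (μ := μ)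
          (fun n => (measurableSet_lt measurable_const hY).nullMeasurableSet) hAnt
          ⟨0, measure_ne_top μ _⟩
        rw [hInt] at ht
        obtain ⟨n, hn⟩ := (ht.eventually (eventually_lt_nhds hcon)).exists
        set t := s - 1 / ((n : ℝ) + 1) with htdef
        have hts : t < s := by
          have : (0:ℝ) < 1 / ((n : ℝ) + 1) := by positivity
          simp only [htdef]; linarith
        have hlb := hflb t s hts.le
        have htR : (μ {ω | t < Y ω}).toReal < 1 - α :=
          (ENNReal.lt_ofReal_iff_toReal_lt (measure_ne_top μ _)).1 hn
        have hlt1 : c * (μ {ω | t < Y ω}).toReal < 1 := by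
          have := mul_lt_mul_of_pos_left htR hcpos
          rw [hc1] at this
          exact this
        have hpos : 0 < f s - f t := by nlinarith
        exact absurd (hmin t) (by linarith)
    · rintro ⟨ha, hb⟩ t
      have haR : α ≤ (μ {ω | Y ω ≤ s}).toReal :=
        (ENNReal.ofReal_le_iff_le_toReal (measure_ne_top μ _)).1 ha
      have hbR : 1 - α ≤ (μ {ω | s ≤ Y ω}).toReal :=
        (ENNReal.ofReal_le_iff_le_toReal (measure_ne_top μ _)).1 hb
      have hsum := aux_compl_sum (μ := μ) hY s
      have hlt : (μ {ω | s < Y ω}).toReal ≤ 1 - α := by linarith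
      rcases le_total s t with hst | hts
      · have hl := hflb s t hst
        have h2 : c * (μ {ω | s < Y ω}).toReal ≤ 1 := by
          have := mul_le_mul_of_nonneg_left hlt hcpos.le
          rw [hc1] at this
          exact this
        nlinarith
      · have hu := hfub t s hts
        have h2 : 1 ≤ c * (μ {ω | s ≤ Y ω}).toReal := by
          have := mul_le_mul_of_nonneg_left hbR hcpos.le
          rw [hc1] at this
          exact this
        nlinarith
  -- the interval is nonempty
  have hq1q2 : q1 ≤ q2 := by
    rw [hq2_iff]
    have hlt := measure_lt_quantile_le (μ := μ) hY h0 h1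
    rw [← hq1def] at hlt
    have hcompl : {ω | q1 ≤ Y ω} = {ω | Y ω < q1}ᶜ := by ext ω; simp [not_lt]
    rw [hcompl, prob_compl_eq_one_sub (measurableSet_lt hY measurable_const)]
    calc ENNReal.ofReal (1 - α) = 1 - ENNReal.ofReal α := by
          rw [ENNReal.ofReal_sub 1 h0.le, ENNReal.ofReal_one]
      _ ≤ 1 - μ {ω | Y ω < q1} := tsub_le_tsub_left hlt 1
  refine ⟨?_, hq1q2⟩
  ext s
  simp only [mem_setOf_eq, mem_Icc, hobj]
  rw [hchar s, ← hq1_iff s, ← hq2_iff s]
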